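/- arXiv:2507.18259 — 4 statements merged into one kernel-verified Lean document; each statement's English description precedes it below -/
import Mathlib

section
/- Let Q be an orthogonal projection on a Hilbert space H and let ρ be a density operator on the k-fold tensor power H^{⊗k}. If for every i ∈ {1,…,k} the reduced state tr_{≠i}(ρ) (the partial trace over all tensor factors except the i-th) satisfies tr(Q · tr_{≠i}(ρ)) ≥ 1 − ε, then tr(Q^{⊗k} ρ) ≥ 1 − k·ε. -/
open Finset
open scoped ComplexOrder
open Matrix

/-- k-fold tensor power of a single-system operator, as a matrix on `Fin k → Fin d`. -/
noncomputable def tensorPow {d k : ℕ} (Q : Matrix (Fin d) (Fin d) ℂ) :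
    Matrix (Fin k → Fin d) (Fin k → Fin d) ℂ :=
  fun fa fb => ∏ j, Q (fa j) (fb j)

/-- Partial trace over all tensor factors except the `i`-th one. -/
noncomputable def ptraceExcept {d k : ℕ} (i : Fin k)
    (ρ : Matrix (Fin k → Fin d) (Fin k → Fin d) ℂ) : Matrix (Fin d) (Fin d) ℂ :=
  fun a b => ∑ f : {j : Fin k // j ≠ i} → Fin d,
    ρ (fun j => if h : j = i then a else f ⟨j, h⟩)
      (fun j => if h : j = i then b else f ⟨j, h⟩)


lemma psd_trace_re_nonneg {n : Type*} [Fintype n] {A : Matrix n n ℂ}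
    (hA : A.PosSemidef) : 0 ≤ (A.trace).re := by
  classical
  have h : ∀ i, 0 ≤ A i i := by
    intro i
    exact hA.diag_nonneg
  have h2 : 0 ≤ A.trace := Finset.sum_nonneg fun i _ => h i
  exact (Complex.le_def.mp h2).1

lemma trace_mul_psd_re_nonneg {n : Type*} [Fintype n] [DecidableEq n]
    {A B : Matrix n n ℂ} (hA : A.PosSemidef) (hB : B.PosSemidef) :
    0 ≤ ((A * B).trace).re := by
  have hC : ∃ C : Matrix n n ℂ, A = star C * C := by
    open scoped MatrixOrder in exact CStarAlgebra.nonneg_iff_eq_star_mul_self.mp hA.nonneg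
  obtain ⟨C, rfl⟩ := hC
  rw [Matrix.mul_assoc, Matrix.trace_mul_comm]
  exact psd_trace_re_nonneg (hB.mul_mul_conjTranspose_same C)

lemma psd_of_idem {n : Type*} [Fintype n] {A : Matrix n n ℂ}
    (hA : A.IsHermitian) (h2 : A * A = A) : A.PosSemidef := by
  have h3 : A = Aᴴ * A := by
    rw [hA.eq]
    exact h2.symm
  rw [h3]
  exact Matrix.posSemidef_conjTranspose_mul_self A

noncomputable def kron {d k : ℕ} (A : Fin k → Matrix (Fin d) (Fin d) ℂ) :
    Matrix (Fin k → Fin d) (Fin k → Fin d) ℂ :=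
  fun fa fb => ∏ j, A j (fa j) (fb j)

lemma kron_mul {d k : ℕ} (A B : Fin k → Matrix (Fin d) (Fin d) ℂ) :
    kron A * kron B = kron (fun j => A j * B j) := by
  ext fa fb
  simp only [kron, Matrix.mul_apply]
  rw [Finset.prod_univ_sum, Fintype.piFinset_univ]
  exact Finset.sum_congr rfl fun g _ => (Finset.prod_mul_distrib).symm

lemma kron_one {d k : ℕ} : kron (fun _ : Fin k => (1 : Matrix (Fin d) (Fin d) ℂ)) = 1 := by
  ext fa fb
  simp only [kron, Matrix.one_apply]
  by_cases h : fa = fb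
  · subst h; simp
  · rw [if_neg h]
    obtain ⟨j, hj⟩ := Function.ne_iff.mp h
    exact Finset.prod_eq_zero (Finset.mem_univ j) (by simp [hj])

lemma kron_conjTranspose {d k : ℕ} (A : Fin k → Matrix (Fin d) (Fin d) ℂ) :
    (kron A).conjTranspose = kron (fun j => (A j).conjTranspose) := by
  ext fa fb
  simp [kron, Matrix.conjTranspose_apply]

lemma step_lemma {n : Type*} [Fintype n] [DecidableEq n] {A B ρ : Matrix n n ℂ}
    (hA : A.IsHermitian) (hA2 : A * A = A) (hB : B.IsHermitian) (hB2 : B * B = B)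
    (hcomm : A * B = B * A) (hρ : ρ.PosSemidef) :
    ((A * ρ).trace).re - (((1 - B) * ρ).trace).re ≤ ((B * A * ρ).trace).re := by
  have h1A : (1 - A).PosSemidef := by
    refine psd_of_idem ((Matrix.isHermitian_one).sub hA) ?_
    noncomm_ring [hA2]
  have hBh : (1 - B).IsHermitian := (Matrix.isHermitian_one).sub hB
  have hM : ((1 - B) * (1 - A)).PosSemidef := by
    have key : (1 - B) * (1 - A) = (1 - B) * (1 - A) * (1 - B).conjTranspose := by
      rw [hBh.eq]
      have hco : (1 - A) * (1 - B) = (1 - B) * (1 - A) := by noncomm_ring [hcomm]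
      have hC2 : (1 - B) * (1 - B) = 1 - B := by noncomm_ring [hB2]
      conv_rhs => rw [Matrix.mul_assoc, hco, ← Matrix.mul_assoc, hC2]
    rw [key]
    exact h1A.mul_mul_conjTranspose_same (1 - B)
  have h0 : 0 ≤ (((1 - B) * (1 - A) * ρ).trace).re :=
    trace_mul_psd_re_nonneg hM hρ
  have expand : (1 - B) * (1 - A) * ρ = ρ - A * ρ - B * ρ + B * A * ρ := by noncomm_ring
  have expand2 : (1 - B) * ρ = ρ - B * ρ := by noncomm_ring
  rw [expand] at h0
  rw [expand2]
  simp only [Matrix.trace_add, Matrix.trace_sub, Complex.add_re, Complex.sub_re] at h0 ⊢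
  linarith

def uIns {d k : ℕ} (i : Fin k) (a : Fin d) (f : {j : Fin k // j ≠ i} → Fin d) :
    Fin k → Fin d := fun j => if h : j = i then a else f ⟨j, h⟩

def eSplit {d k : ℕ} (i : Fin k) :
    (Fin d × ({j : Fin k // j ≠ i} → Fin d)) ≃ (Fin k → Fin d) where
  toFun p := uIns i p.1 p.2
  invFun g := (g i, fun j => g j.1)
  left_inv := by
    rintro ⟨a, f⟩
    refine Prod.ext ?_ ?_
    · simp [uIns]
    · funext j
      simp [uIns, j.2]
  right_inv := by
    intro g
    funext j
    by_cases h : j = i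
    · subst h; simp [uIns]
    · simp [uIns, h]

lemma trace_site {d k : ℕ} (Q : Matrix (Fin d) (Fin d) ℂ) (i : Fin k)
    (ρ : Matrix (Fin k → Fin d) (Fin k → Fin d) ℂ) :
    ((kron (fun j => if j = i then Q else 1)) * ρ).trace
      = (Q * ptraceExcept i ρ).trace := by
  classical
  have key : ∀ (a b : Fin d) (f g : {j : Fin k // j ≠ i} → Fin d),
      kron (fun j => if j = i then Q else 1) (uIns i a f) (uIns i b g)
        = Q a b * (if f = g then 1 else 0) := by
    intro a b f g
    unfold kron
    rw [← Finset.mul_prod_erase Finset.univ _ (Finset.mem_univ i)]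
    congr 1
    · simp [uIns]
    · rw [Finset.prod_subtype (Finset.univ.erase i) (p := fun j => j ≠ i)
        (by simp [Finset.mem_erase])]
      have : ∀ t : {j : Fin k // j ≠ i},
          (if (t : Fin k) = i then Q else 1) (uIns i a f t) (uIns i b g t)
            = if f t = g t then 1 else 0 := by
        intro t
        rw [if_neg t.2]
        simp [uIns, t.2, Matrix.one_apply]
      rw [Finset.prod_congr rfl fun t _ => this t]
      rw [Fintype.prod_boole]
      congr 1
      simp [funext_iff]
  have reindex : ∀ F : (Fin k → Fin d) → ℂ,
      ∑ fa, F fa = ∑ p : Fin d × ({j : Fin k // j ≠ i} → Fin d), F (eSplit i p) :=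
    fun F => (Equiv.sum_comp (eSplit i) F).symm
  simp only [Matrix.trace, Matrix.diag, Matrix.mul_apply]
  rw [reindex]
  refine Eq.trans (Finset.sum_congr rfl fun p _ => reindex _) ?_
  simp only [Fintype.sum_prod_type, eSplit, Equiv.coe_fn_mk]
  simp_rw [key]
  have collapse : ∀ (a b : Fin d) (f : {j : Fin k // j ≠ i} → Fin d),
      ∑ g : {j : Fin k // j ≠ i} → Fin d,
        Q a b * (if f = g then 1 else 0) * ρ (uIns i b g) (uIns i a f)
        = Q a b * ρ (uIns i b f) (uIns i a f) := by
    intro a b f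
    rw [Finset.sum_eq_single f]
    · simp
    · intro g _ hg
      simp [Ne.symm hg]
    · simp
  simp_rw [collapse]
  unfold ptraceExcept
  simp_rw [Finset.mul_sum]
  refine Finset.sum_congr rfl fun a _ => ?_
  rw [Finset.sum_comm]
  rfl

noncomputable def PS {d k : ℕ} (Q : Matrix (Fin d) (Fin d) ℂ) (S : Finset (Fin k)) :
    Matrix (Fin k → Fin d) (Fin k → Fin d) ℂ :=
  kron (fun j => if j ∈ S then Q else 1)

noncomputable def Esite {d k : ℕ} (Q : Matrix (Fin d) (Fin d) ℂ) (i : Fin k) :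
    Matrix (Fin k → Fin d) (Fin k → Fin d) ℂ :=
  kron (fun j => if j = i then Q else 1)

section proj
variable {d k : ℕ} {Q : Matrix (Fin d) (Fin d) ℂ}

lemma PS_herm (hQ : Q.IsHermitian) (S : Finset (Fin k)) : (PS Q S).IsHermitian := by
  unfold Matrix.IsHermitian PS
  rw [kron_conjTranspose]
  refine congrArg kron (funext fun j => ?_)
  by_cases h : j ∈ S <;> simp [h, hQ.eq]

lemma Esite_herm (hQ : Q.IsHermitian) (i : Fin k) : (Esite Q i).IsHermitian := by
  unfold Matrix.IsHermitian Esite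
  rw [kron_conjTranspose]
  refine congrArg kron (funext fun j => ?_)
  by_cases h : j = i <;> simp [h, hQ.eq]

lemma PS_idem (hQ2 : Q * Q = Q) (S : Finset (Fin k)) : PS Q S * PS Q S = PS Q S := by
  unfold PS
  rw [kron_mul]
  refine congrArg kron (funext fun j => ?_)
  by_cases h : j ∈ S <;> simp [h, hQ2]

lemma Esite_idem (hQ2 : Q * Q = Q) (i : Fin k) : Esite Q i * Esite Q i = Esite Q i := by
  unfold Esite
  rw [kron_mul]
  refine congrArg kron (funext fun j => ?_)
  by_cases h : j = i <;> simp [h, hQ2]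

lemma PS_insert {i : Fin k} {S : Finset (Fin k)} (hiS : i ∉ S) :
    PS Q (insert i S) = Esite Q i * PS Q S := by
  unfold PS Esite
  rw [kron_mul]
  refine congrArg kron (funext fun j => ?_)
  by_cases h1 : j = i
  · subst h1
    simp [hiS]
  · by_cases h2 : j ∈ S <;> simp [h1, h2, Finset.mem_insert]

lemma PS_comm_Esite (hQ2 : Q * Q = Q) (S : Finset (Fin k)) (i : Fin k) :
    PS Q S * Esite Q i = Esite Q i * PS Q S := by
  unfold PS Esite
  rw [kron_mul, kron_mul]
  refine congrArg kron (funext fun j => ?_)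
  by_cases h1 : j = i <;> by_cases h2 : j ∈ S <;> simp [h1, h2, hQ2]

lemma PS_empty : PS Q (∅ : Finset (Fin k)) = 1 := by
  unfold PS
  simpa using kron_one (d := d) (k := k)

lemma PS_univ : PS Q (Finset.univ : Finset (Fin k)) = kron (fun _ => Q) := by
  unfold PS
  refine congrArg kron (funext fun j => ?_)
  simp

end proj

lemma main_ind {d k : ℕ} (ε : ℝ)
    (ρ : Matrix (Fin k → Fin d) (Fin k → Fin d) ℂ)
    (hρpos : ρ.PosSemidef) (hρtr : ρ.trace = 1)
    (Q : Matrix (Fin d) (Fin d) ℂ) (hQherm : Q.IsHermitian) (hQproj : Q * Q = Q)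
    (h : ∀ i : Fin k, 1 - ε ≤ ((Q * ptraceExcept i ρ).trace).re)
    (S : Finset (Fin k)) :
    1 - S.card * ε ≤ ((PS Q S * ρ).trace).re := by
  classical
  induction S using Finset.induction with
  | empty =>
      rw [PS_empty, Matrix.one_mul, hρtr]
      simp
  | @insert i S hiS ih =>
      rw [PS_insert hiS]
      have hstep := step_lemma (PS_herm hQherm S) (PS_idem hQproj S)
        (Esite_herm hQherm i) (Esite_idem hQproj i) (PS_comm_Esite hQproj S i) hρpos
      have hloc : (((1 - Esite Q i) * ρ).trace).re ≤ ε := by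
        have hE : ((Esite Q i * ρ).trace) = (Q * ptraceExcept i ρ).trace := trace_site Q i ρ
        have : (1 - Esite Q i) * ρ = ρ - Esite Q i * ρ := by noncomm_ring
        rw [this, Matrix.trace_sub, Complex.sub_re, hρtr, hE]
        have := h i
        simp only [Complex.one_re]
        linarith
      have hcard : (insert i S).card = S.card + 1 := Finset.card_insert_of_notMem hiS
      rw [hcard]
      push_cast
      nlinarith [hstep, hloc, ih]

/-- if every single-site marginal of the density operator ρ has
`tr(Q ⋅ tr_{≠i} ρ) ≥ 1 - ε` for a projection `Q`, then `tr(Q^{⊗k} ρ) ≥ 1 - k ε`. -/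
theorem local_to_global_trace_bound {d k : ℕ} (ε : ℝ)
    (ρ : Matrix (Fin k → Fin d) (Fin k → Fin d) ℂ)
    (hρpos : ρ.PosSemidef) (hρtr : ρ.trace = 1)
    (Q : Matrix (Fin d) (Fin d) ℂ) (hQherm : Q.IsHermitian) (hQproj : Q * Q = Q)
    (h : ∀ i : Fin k, 1 - ε ≤ ((Q * ptraceExcept i ρ).trace).re) :
    1 - k * ε ≤ (((tensorPow Q : Matrix (Fin k → Fin d) (Fin k → Fin d) ℂ) * ρ).trace).re := by
  have hmain := main_ind ε ρ hρpos hρtr Q hQherm hQproj h Finset.univ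
  have he : PS Q (Finset.univ : Finset (Fin k)) = tensorPow Q := by
    rw [PS_univ]
    rfl
  rw [he] at hmain
  simpa [Finset.card_univ] using hmain
end

section
/- Let ρ be a single-mode bosonic density operator of the form ρ = ∫ P_β(0) dμ(β), where P_β(0) is the phase-randomized coherent state of amplitude β and μ is a sub-Gaussian probability measure on ℂ with constant K (i.e. μ({β : |β| ≥ t}) ≤ 2exp(−t²/K²)). Assume that for every β with |β|² ≤ N/22 and N ≥ 44 the bound tr(P_N P_β(0)) ≥ 1 − 4^{−N} holds, where P_N = ∑_{n=0}^{N−1} |n⟩⟨n|. Then tr(P_N ρ) ≥ 1 − 2^{2 − N·min{2, (log₂e)/(22K²)}}. -/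
open MeasureTheory

/-- for `ρ = ∫ P_β(0) dμ(β)` a mixture of phase-randomized coherent states
with `μ` sub-Gaussian with constant `K`, assuming the Poisson tail bound
`tr(P_N P_β(0)) ≥ 1 - 4^{-N}` for all `|β|² ≤ N/22` (with `N ≥ 44`), we have
`tr(P_N ρ) = ∫ tr(P_N P_β(0)) dμ(β) ≥ 1 - 2^{2 - N·min{2, log₂(e)/(22K²)}}`. -/
theorem effective_dimension_phase_randomized
    (N : ℕ) (hN : 44 ≤ N) (K : ℝ) (hK : 0 < K)
    (μ : Measure ℂ) [IsProbabilityMeasure μ]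
    (trPN : ℂ → ℝ)  -- `trPN β` denotes `tr(P_N · P_β(0))`
    (htrMeas : Measurable trPN)
    (htr01 : ∀ β : ℂ, 0 ≤ trPN β ∧ trPN β ≤ 1)
    (hsubG : ∀ t : ℝ, 0 ≤ t →
      (μ {β : ℂ | t ≤ ‖β‖}).toReal ≤ 2 * Real.exp (-t ^ 2 / K ^ 2))
    (hpoisson : ∀ β : ℂ, ‖β‖ ^ 2 ≤ (N : ℝ) / 22 →
      1 - (4 : ℝ) ^ (-(N : ℝ)) ≤ trPN β) :
    1 - (2 : ℝ) ^ ((2 : ℝ) - (N : ℝ) * min 2 (Real.logb 2 (Real.exp 1) / (22 * K ^ 2)))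
      ≤ ∫ β, trPN β ∂μ := by
  set L : ℝ := Real.logb 2 (Real.exp 1) with hL
  set m : ℝ := min 2 (L / (22 * K ^ 2)) with hm
  set G : Set ℂ := {β : ℂ | ‖β‖ ^ 2 ≤ (N : ℝ) / 22} with hG
  have hGmeas : MeasurableSet G := by
    apply measurableSet_le
    · exact (continuous_norm.pow 2).measurable
    · exact measurable_const
  have hInt : Integrable trPN μ := by
    apply Integrable.mono' (integrable_const (1 : ℝ)) htrMeas.aestronglyMeasurable
    filter_upwards with β
    rw [Real.norm_eq_abs, abs_le]
    exact ⟨by linarith [(htr01 β).1], (htr01 β).2⟩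
  set ε : ℝ := 2 * Real.exp (-((N : ℝ) / 22) / K ^ 2) with hε
  have hεnn : 0 ≤ ε := by positivity
  have hbad : (μ Gᶜ).toReal ≤ ε := by
    have hsub : Gᶜ ⊆ {β : ℂ | Real.sqrt ((N : ℝ) / 22) ≤ ‖β‖} := by
      intro β hβ
      simp only [Set.mem_compl_iff, hG, Set.mem_setOf_eq, not_le] at hβ ⊢
      calc Real.sqrt ((N : ℝ) / 22) ≤ Real.sqrt (‖β‖ ^ 2) :=
            Real.sqrt_le_sqrt hβ.le
        _ = ‖β‖ := Real.sqrt_sq (norm_nonneg β)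
    have h1 : (μ Gᶜ).toReal
        ≤ (μ {β : ℂ | Real.sqrt ((N : ℝ) / 22) ≤ ‖β‖}).toReal :=
      ENNReal.toReal_mono (measure_ne_top μ _) (measure_mono hsub)
    have h2 := hsubG (Real.sqrt ((N : ℝ) / 22)) (Real.sqrt_nonneg _)
    rw [Real.sq_sqrt (by positivity)] at h2
    exact h1.trans h2
  have hsum : (μ G).toReal + (μ Gᶜ).toReal = 1 := by
    rw [← ENNReal.toReal_add (measure_ne_top μ _) (measure_ne_top μ _),
      measure_add_measure_compl hGmeas, measure_univ, ENNReal.toReal_one]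
  set a : ℝ := (4 : ℝ) ^ (-(N : ℝ)) with ha
  have hann : 0 ≤ a := by positivity
  have ha1 : a ≤ 1 := by
    rw [ha]
    calc (4 : ℝ) ^ (-(N : ℝ)) ≤ (4 : ℝ) ^ (0 : ℝ) := by
          apply Real.rpow_le_rpow_of_exponent_le (by norm_num)
          simp
      _ = 1 := Real.rpow_zero 4
  -- integral lower bound
  have step1 : ∫ β in G, trPN β ∂μ ≤ ∫ β, trPN β ∂μ := by
    apply setIntegral_le_integral hInt
    filter_upwards with β using (htr01 β).1
  have step2 : (1 - a) * (μ G).toReal ≤ ∫ β in G, trPN β ∂μ := by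
    have : ∫ β in G, (1 - a) ∂μ ≤ ∫ β in G, trPN β ∂μ := by
      apply setIntegral_mono_on (integrableOn_const (measure_ne_top μ G))
        hInt.integrableOn hGmeas
      intro β hβ
      exact hpoisson β hβ
    simpa [smul_eq_mul, mul_comm, Measure.real] using this
  -- arithmetic on the exponential bounds
  have hmle2 : m ≤ 2 := min_le_left _ _
  have hmleL : m ≤ L / (22 * K ^ 2) := min_le_right _ _
  have hNnn : (0 : ℝ) ≤ (N : ℝ) := Nat.cast_nonneg N
  have hbase : (1 : ℝ) < 2 := one_lt_two
  have habound : a ≤ (2 : ℝ) ^ (-((N : ℝ) * m)) := by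
    have h4 : (4 : ℝ) = (2 : ℝ) ^ (2 : ℝ) := by
      rw [show ((2 : ℝ) : ℝ) = ((2 : ℕ) : ℝ) by norm_num, Real.rpow_natCast]; norm_num
    rw [ha, h4, ← Real.rpow_mul (by norm_num)]
    apply Real.rpow_le_rpow_of_exponent_le (by norm_num)
    nlinarith
  have hexpbound : ε ≤ 2 * (2 : ℝ) ^ (-((N : ℝ) * m)) := by
    have he : Real.exp (-((N : ℝ) / 22) / K ^ 2)
        = (2 : ℝ) ^ (L * (-((N : ℝ) / 22) / K ^ 2)) := by
      rw [Real.rpow_mul (by norm_num : (0:ℝ) ≤ 2), hL,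
        Real.rpow_logb (by norm_num) (by norm_num) (Real.exp_pos 1),
        Real.exp_one_rpow]
    rw [hε, he]
    have hexp_le : L * (-((N : ℝ) / 22) / K ^ 2) ≤ -((N : ℝ) * m) := by
      have heq : L * (-((N : ℝ) / 22) / K ^ 2) = -((N : ℝ) * (L / (22 * K ^ 2))) := by
        field_simp
      rw [heq]
      have : (N : ℝ) * m ≤ (N : ℝ) * (L / (22 * K ^ 2)) :=
        mul_le_mul_of_nonneg_left hmleL hNnn
      linarith
    have := Real.rpow_le_rpow_of_exponent_le hbase.le hexp_le
    linarith
  have hrhs : (2 : ℝ) ^ ((2 : ℝ) - (N : ℝ) * m) = 4 * (2 : ℝ) ^ (-((N : ℝ) * m)) := by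
    rw [show (2 : ℝ) - (N : ℝ) * m = 2 + (-((N : ℝ) * m)) by ring,
      Real.rpow_add (by norm_num)]
    congr 1
    rw [show ((2 : ℝ) : ℝ) = ((2 : ℕ) : ℝ) by norm_num, Real.rpow_natCast]; norm_num
  have hpow_nn : (0 : ℝ) ≤ (2 : ℝ) ^ (-((N : ℝ) * m)) := by positivity
  have hGnn : 0 ≤ (μ G).toReal := ENNReal.toReal_nonneg
  calc 1 - (2 : ℝ) ^ ((2 : ℝ) - (N : ℝ) * m)
      ≤ 1 - a - ε := by rw [hrhs]; nlinarith
    _ ≤ (1 - a) * (μ G).toReal := by nlinarith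
    _ ≤ ∫ β in G, trPN β ∂μ := step2
    _ ≤ ∫ β, trPN β ∂μ := step1
end

section
/- Let p_1,…,p_k ∈ P([d]), let p̄^k := (1/k!)∑_{π∈S_k} ∏_{i=1}^k p_{π(i)} be the symmetrized product distribution, and p̄ := (1/k)∑_i p_i. Then for every ε > 0, the probability under p̄^k of the set of strings x^k whose empirical distribution m(·) := N(·|x^k)/k satisfies ‖m − p̄‖_1 ≥ ε is at most C·(2d)^k·exp(−ε²k) with an absolute constant C, i.e. ∑_{‖m − p̄‖_1 ≤ ε} p̄^k(T_m) ≥ 1 − C·(2d)^k·exp(−ε²k), where T_m is the set of strings with empirical distribution m. -/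
open Finset


lemma log_tangent {a y : ℝ} (ha : 0 < a) (hy : 0 < y) :
    Real.log y ≤ Real.log a + (y - a) / a := by
  have h := Real.log_le_sub_one_of_pos (show 0 < y / a by positivity)
  rw [Real.log_div (ne_of_gt hy) (ne_of_gt ha)] at h
  have : y / a - 1 = (y - a) / a := by field_simp
  linarith [this ▸ h]

lemma exp_neg_one_lt : Real.exp (-1) < 0.368 := by
  rw [Real.exp_neg]
  have h1 : (0:ℝ) < Real.exp 1 := Real.exp_pos 1
  rw [inv_lt_iff_one_lt_mul₀ h1]
  nlinarith [Real.exp_one_gt_d9]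

lemma xlogx_ge {x : ℝ} (hx : 0 < x) : -0.368 ≤ x * Real.log x := by
  have h1 : Real.log x⁻¹ ≤ Real.log (0.368 : ℝ)⁻¹ + (x⁻¹ - (0.368:ℝ)⁻¹) * 0.368 := by
    have := log_tangent (show (0:ℝ) < (0.368:ℝ)⁻¹ by norm_num) (show 0 < x⁻¹ by positivity)
    have e : (x⁻¹ - (0.368:ℝ)⁻¹) / (0.368:ℝ)⁻¹ = (x⁻¹ - (0.368:ℝ)⁻¹) * 0.368 := by
      rw [div_inv_eq_mul]
    linarith [e ▸ this]
  have hlog : Real.log (0.368:ℝ)⁻¹ ≤ 1 := by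
    rw [Real.log_inv]
    have : (-1:ℝ) < Real.log 0.368 := by
      rw [Real.lt_log_iff_exp_lt (by norm_num : (0:ℝ) < 0.368)]
      exact exp_neg_one_lt
    linarith
  -- x * log x = - (x * log x⁻¹)
  have h2 : x * Real.log x⁻¹ ≤ x * (1 + (x⁻¹ - (0.368:ℝ)⁻¹) * 0.368) := by
    apply mul_le_mul_of_nonneg_left _ hx.le
    linarith
  have h3 : x * (1 + (x⁻¹ - (0.368:ℝ)⁻¹) * 0.368) = x * (1 - 1) + 0.368 := by
    field_simp
    ring
  rw [Real.log_inv] at h2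
  nlinarith

lemma log_one_add_ge {x : ℝ} (hx : 0 ≤ x) : 2*x/(2+x) ≤ Real.log (1+x) := by
  set g : ℝ → ℝ := fun z => Real.log (1+z) - 2*z/(2+z) with hg
  have key : ∀ z ∈ Set.Ici (0:ℝ) , 0 ≤ z → True := fun _ _ _ => trivial
  have hder : ∀ z : ℝ, 0 < z → HasDerivAt g (1/(1+z) - 4/(2+z)^2) z := by
    intro z hz
    have h1 : HasDerivAt (fun w : ℝ => 1 + w) 1 z := (hasDerivAt_id z).const_add 1
    have h2 : HasDerivAt (fun w : ℝ => Real.log (1 + w)) (1/(1+z)) z := by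
      simpa using h1.log (by linarith)
    have h3 : HasDerivAt (fun w : ℝ => 2*w) 2 z := by
      simpa using (hasDerivAt_id z).const_mul 2
    have h4 : HasDerivAt (fun w : ℝ => 2 + w) 1 z := (hasDerivAt_id z).const_add 2
    have h5 : HasDerivAt (fun w : ℝ => 2*w/(2+w)) ((2*(2+z) - 2*z*1)/(2+z)^2) z :=
      h3.div h4 (by linarith)
    have e : (2*(2+z) - 2*z*1)/(2+z)^2 = 4/(2+z)^2 := by ring_nf
    rw [e] at h5
    exact h2.sub h5
  have hmono : MonotoneOn g (Set.Ici (0:ℝ)) := by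
    apply monotoneOn_of_deriv_nonneg (convex_Ici 0)
    · apply ContinuousOn.sub
      · apply ContinuousOn.log (by fun_prop)
        intro z hz; simp at hz; intro h; linarith
      · apply ContinuousOn.div (by fun_prop) (by fun_prop)
        intro z hz; simp at hz; intro h; linarith
    · intro z hz
      rw [interior_Ici] at hz
      exact ((hder z (Set.mem_Ioi.mp hz)).differentiableAt).differentiableWithinAt
    · intro z hz
      rw [interior_Ici] at hz
      have hz' := Set.mem_Ioi.mp hz
      rw [(hder z hz').deriv]
      have h1 : 0 < 1 + z := by linarith
      have h2 : 0 < 2 + z := by linarith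
      rw [sub_nonneg, div_le_div_iff₀ (by positivity) h1]
      nlinarith [sq_nonneg z]
  have h0 : g 0 ≤ g x := hmono (by simp) (by simpa using hx) hx
  simp [hg] at h0
  linarith

lemma log_one_sub_le {x : ℝ} (h0 : 0 ≤ x) (h1 : x < 1) :
    Real.log (1-x) ≤ -x - x^2/2 := by
  set g : ℝ → ℝ := fun z => -z - z^2/2 - Real.log (1-z) with hg
  have hder : ∀ z : ℝ, 0 < z → z < 1 → HasDerivAt g (-1 - z + 1/(1-z)) z := by
    intro z hz hz1
    have h1' : HasDerivAt (fun w : ℝ => 1 - w) (-1) z := by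
      simpa using (hasDerivAt_id z).const_sub 1
    have h2 : HasDerivAt (fun w : ℝ => Real.log (1 - w)) (-1/(1-z)) z := by
      simpa using h1'.log (by intro h; linarith)
    have h3 : HasDerivAt (fun w : ℝ => -w - w^2/2) (-1 - z) z := by
      have := ((hasDerivAt_id z).neg).sub (((hasDerivAt_pow 2 z)).div_const 2)
      exact this.congr_deriv (by push_cast; ring)
    have := h3.sub h2
    have e : -1 - z - (-1/(1-z)) = -1 - z + 1/(1-z) := by ring
    rw [e] at this
    exact this
  have hmono : MonotoneOn g (Set.Ico (0:ℝ) 1) := by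
    apply monotoneOn_of_deriv_nonneg (convex_Ico 0 1)
    · apply ContinuousOn.sub (by fun_prop)
      apply ContinuousOn.log (by fun_prop)
      intro z hz
      simp only [Set.mem_Ico] at hz
      intro h; linarith [hz.2]
    · intro z hz
      rw [interior_Ico] at hz
      obtain ⟨hz0, hz1⟩ := hz
      exact ((hder z hz0 hz1).differentiableAt).differentiableWithinAt
    · intro z hz
      rw [interior_Ico] at hz
      obtain ⟨hz0, hz1⟩ := hz
      rw [(hder z hz0 hz1).deriv]
      have h2 : 0 < 1 - z := by linarith
      rw [show -1 - z + 1/(1-z) = (-1-z) + 1/(1-z) by ring, ← sub_nonneg]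
      have : (-1-z) + 1/(1-z) - 0 = z^2/(1-z) := by field_simp; ring
      rw [this]
      positivity
  have h0' : g 0 ≤ g x := hmono (by simp) (by simp [h0, h1]) h0
  simp [hg] at h0'
  linarith

set_option maxHeartbeats 1200000 in
lemma klB {u σ : ℝ} (hu0 : 0 < u) (hu32 : u ≤ 0.32) (hσ0 : 0 < σ) (hσ1 : σ < 1) :
    (1-u*σ)*Real.log (1-u*σ) - (1-u*σ)*Real.log (u*(1-σ))
      - (u*σ)*Real.log (1-u*(1-σ)) + (u*σ)*Real.log (u*σ)
      ≥ 4*(1-u)^2 - Real.log 4 := by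
  have hlog2 : (0.6931:ℝ) < Real.log 2 := by
    have := Real.log_two_gt_d9; linarith
  have hlog4 : Real.log 4 = 2 * Real.log 2 := by
    rw [show (4:ℝ) = 2^2 by norm_num, Real.log_pow]; push_cast; ring
  have hs0 : 0 < u*σ := by positivity
  have hs1 : u*σ < 1 := by nlinarith
  have ha0 : 0 < 1 - u*σ := by linarith
  have h1σ : 0 < 1 - σ := by linarith
  have hq0 : 0 < u*(1-σ) := by positivity
  have hq1 : u*(1-σ) < 1 := by nlinarith
  -- piece 1 : a log a ≥ a - 1
  have hb1 : -(u*σ) ≤ (1-u*σ) * Real.log (1-u*σ) := by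
    have h := Real.one_sub_inv_le_log_of_pos ha0
    have h2 := mul_le_mul_of_nonneg_left h ha0.le
    have he : (1-u*σ) * (1 - (1-u*σ)⁻¹) = (1-u*σ) - 1 := by field_simp
    nlinarith
  -- piece 2 : log q = log u + log(1-σ) ≤ log u - σ - σ²/2
  have hlogq : Real.log (u*(1-σ)) ≤ Real.log u - σ - σ^2/2 := by
    rw [Real.log_mul (ne_of_gt hu0) (ne_of_gt h1σ)]
    have := log_one_sub_le hσ0.le hσ1
    linarith
  have hb2 : (1-u*σ) * Real.log (u*(1-σ))
      ≤ (1-u*σ) * Real.log u - (1-u*σ)*σ - (1-u*σ)*σ^2/2 := by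
    have := mul_le_mul_of_nonneg_left hlogq ha0.le
    nlinarith
  -- piece 3
  have hb3 : (u*σ) * Real.log (1-u*(1-σ)) ≤ 0 :=
    mul_nonpos_of_nonneg_of_nonpos hs0.le (Real.log_nonpos (by linarith) (by linarith))
  -- piece 4
  have hb4 : (u*σ) * Real.log (u*σ) = (u*σ) * Real.log u + u*(σ*Real.log σ) := by
    rw [Real.log_mul (ne_of_gt hu0) (ne_of_gt hσ0)]
    ring
  have hx1 : -0.368 ≤ u * Real.log u := xlogx_ge hu0
  have hx3 : σ * Real.log σ ≤ 0 :=
    mul_nonpos_of_nonneg_of_nonpos hσ0.le (Real.log_nonpos hσ0.le hσ1.le)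
  have hsLu : -0.368*σ ≤ (u*σ) * Real.log u := by
    nlinarith [mul_le_mul_of_nonneg_left hx1 hσ0.le]
  have huσL : -(0.32*0.368) ≤ u * (σ*Real.log σ) := by
    nlinarith [mul_le_mul_of_nonpos_right hu32 hx3, xlogx_ge hσ0]
  -- B-i polynomial bound
  have hBi : -(0.736:ℝ)*σ - 0.11776 - u*σ + (1-u*σ)*(σ+σ^2/2) ≥ -0.16 := by
    nlinarith [sq_nonneg (σ - 1.4),
      mul_nonneg (sub_nonneg.mpr hu32) hσ0.le,
      mul_nonneg (sub_nonneg.mpr hu32) (mul_nonneg hσ0.le hσ0.le),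
      mul_nonneg (sub_nonneg.mpr hu32) (mul_nonneg (mul_nonneg hσ0.le hσ0.le) hσ0.le),
      mul_nonneg (mul_nonneg hu0.le hσ0.le) (sub_nonneg.mpr hσ1.le),
      mul_nonneg (mul_nonneg hu0.le (mul_nonneg hσ0.le hσ0.le)) (sub_nonneg.mpr hσ1.le)]
  -- B-ii tangent bound
  have hBii : -Real.log u + 2*Real.log 2 - 4*(1-u)^2 ≥ 0.16 := by
    rcases le_or_gt u 0.2 with hu2 | hu2
    · have htan := log_tangent (show (0:ℝ) < 1/8 by norm_num) hu0
      have h18 : Real.log (1/8 : ℝ) = -(3*Real.log 2) := by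
        rw [show (1/8:ℝ) = (2^3)⁻¹ by norm_num, Real.log_inv, Real.log_pow]
        push_cast; ring
      have he : (u - 1/8)/(1/8 : ℝ) = 8*u - 1 := by ring
      rw [h18, he] at htan
      nlinarith [sq_nonneg u]
    · have htan := log_tangent (show (0:ℝ) < 1/4 by norm_num) hu0
      have h14 : Real.log (1/4 : ℝ) = -(2*Real.log 2) := by
        rw [show (1/4:ℝ) = (2^2)⁻¹ by norm_num, Real.log_inv, Real.log_pow]
        push_cast; ring
      have he : (u - 1/4)/(1/4 : ℝ) = 4*u - 1 := by ring
      rw [h14, he] at htan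
      nlinarith [mul_nonneg (sub_nonneg.mpr hu2.le) (sub_nonneg.mpr hu32)]
  -- assemble
  have haLu : (1-u*σ) * Real.log u = Real.log u - (u*σ)*Real.log u := by ring
  rw [hlog4]
  nlinarith [hb1, hb2, hb3, hb4, hsLu, huσL, hBi, hBii, haLu]

set_option maxHeartbeats 1000000 in
lemma core {t q : ℝ} (ht0 : 0 < t) (ht1 : t < 1) (hq0 : 0 < q) (hq1 : q < 1 - t) :
    ∃ lam : ℝ, 0 ≤ lam ∧
      Real.exp (-(lam*(q+t))) * (1 - q + q * Real.exp lam) ≤ 4 * Real.exp (-(4*t^2)) := by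
  have hlog2 : (0.6931:ℝ) < Real.log 2 := by
    have := Real.log_two_gt_d9; linarith
  have hlog4 : Real.log 4 = 2 * Real.log 2 := by
    rw [show (4:ℝ) = 2^2 by norm_num, Real.log_pow]; push_cast; ring
  have hRHS : 4 * Real.exp (-(4*t^2)) = Real.exp (Real.log 4 - 4*t^2) := by
    rw [sub_eq_add_neg, Real.exp_add, Real.exp_log (by norm_num)]
  rcases le_or_gt t 0.68 with hA | hB
  · -- Regime A
    set lam := Real.log ((q+t)/q) with hlam
    have hqt : 0 < q + t := by linarith
    have hrat1 : 1 ≤ (q+t)/q := by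
      rw [le_div_iff₀ hq0]; linarith
    refine ⟨lam, Real.log_nonneg hrat1, ?_⟩
    have helam : Real.exp lam = (q+t)/q := Real.exp_log (by positivity)
    have hfac : 1 - q + q * Real.exp lam = 1 + t := by
      rw [helam]; field_simp; ring
    rw [hfac, hRHS]
    have h1t : (0:ℝ) < 1 + t := by linarith
    rw [show Real.exp (-(lam*(q+t))) * (1+t) = Real.exp (Real.log (1+t) - lam*(q+t)) by
      rw [sub_eq_add_neg, Real.exp_add, Real.exp_log h1t]; ring]
    rw [Real.exp_le_exp]
    -- key bounds
    have hkey1 : Real.log ((q+t)/q) ≥ 2*(t/q)/(2+t/q) := by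
      have : (q+t)/q = 1 + t/q := by field_simp
      rw [this]
      exact log_one_add_ge (by positivity)
    have hkey1' : (q+t) * (2*(t/q)/(2+t/q)) = t + t^2/(2*q+t) := by
      have hne : (2:ℝ) + t/q ≠ 0 := by positivity
      have h2qt : (2*q+t) ≠ 0 := by positivity
      field_simp
      ring
    have hd1 : t^2/(2*q+t) ≥ t^2/(2-t) := by
      apply div_le_div_of_nonneg_left (sq_nonneg t) (by linarith) (by linarith)
    have hkey2 : Real.log (1+t) ≤ Real.log 2 + (t-1)/2 := by
      have := log_tangent (show (0:ℝ) < 2 by norm_num) h1t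
      linarith [this]
    have hmul : lam * (q+t) ≥ t + t^2/(2-t) := by
      have := mul_le_mul_of_nonneg_left hkey1 hqt.le
      calc t + t^2/(2-t) ≤ t + t^2/(2*q+t) := by linarith
        _ = (q+t) * (2*(t/q)/(2+t/q)) := hkey1'.symm
        _ ≤ (q+t) * lam := by
            apply mul_le_mul_of_nonneg_left hkey1 hqt.le
        _ = lam * (q+t) := by ring
    -- final polynomial inequality
    have hpoly : 4*t^2 - t/2 - 1/2 - t^2/(2-t) ≤ Real.log 2 := by
      have h2t : (0:ℝ) < 2 - t := by linarith
      set r := t^2/(2-t) with hr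
      have hre : r * (2-t) = t^2 := by rw [hr]; field_simp
      have hrpos : 0 ≤ r := by positivity
      nlinarith [mul_nonneg (mul_nonneg ht0.le (sub_nonneg.mpr hA)) ht0.le,
        mul_nonneg ht0.le (sub_nonneg.mpr hA), sq_nonneg t,
        mul_nonneg (sub_nonneg.mpr hA) hrpos]
    rw [hlog4]
    linarith
  · -- Regime B
    obtain ⟨u, hu⟩ : ∃ u:ℝ, u = 1 - t := ⟨_, rfl⟩
    obtain ⟨s, hs⟩ : ∃ s:ℝ, s = 1 - q - t := ⟨_, rfl⟩
    have hu0 : 0 < u := by rw [hu]; linarith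
    have hu32 : u ≤ 0.32 := by rw [hu]; linarith
    have hs0 : 0 < s := by rw [hs]; linarith
    have hsu : s < u := by rw [hs, hu]; linarith
    have h1q : 0 < 1 - q := by linarith
    have hqt0 : 0 < q + t := by linarith
    obtain ⟨R, hR⟩ : ∃ R:ℝ, R = (q+t)*(1-q)/(q*s) := ⟨_, rfl⟩
    have hR0 : 0 < R := by rw [hR]; positivity
    have hR1 : 1 ≤ R := by
      rw [hR, le_div_iff₀ (by positivity)]
      have hqs : q*s = q*(1-q-t) := by rw [hs]
      nlinarith [hqs]
    refine ⟨Real.log R, Real.log_nonneg hR1, ?_⟩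
    have helam : Real.exp (Real.log R) = R := Real.exp_log hR0
    have hfacR : 1 - q + q * R = (1-q)/s := by
      rw [hR, eq_div_iff (ne_of_gt hs0)]
      field_simp
      rw [hs]; ring
    have hM : Real.exp (-(Real.log R*(q+t))) * (1 - q + q * Real.exp (Real.log R))
        = Real.exp (Real.log (1-q) - Real.log s - Real.log R*(q+t)) := by
      rw [helam, hfacR, show Real.log (1-q) - Real.log s - Real.log R*(q+t)
          = Real.log ((1-q)/s) + (-(Real.log R*(q+t))) by
        rw [Real.log_div (ne_of_gt h1q) (ne_of_gt hs0)]; ring]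
      rw [Real.exp_add, Real.exp_log (by positivity)]
      ring
    rw [hM, hRHS, Real.exp_le_exp]
    have hlameq : Real.log R
        = Real.log (q+t) + Real.log (1-q) - Real.log q - Real.log s := by
      rw [hR, Real.log_div (by positivity) (by positivity),
        Real.log_mul (ne_of_gt hqt0) (ne_of_gt h1q),
        Real.log_mul (ne_of_gt hq0) (ne_of_gt hs0)]
      ring
    -- instantiate the KL bound
    have hσ0 : 0 < s/u := by positivity
    have hσ1 : s/u < 1 := by rw [div_lt_one hu0]; exact hsu
    have hD0 := klB hu0 hu32 hσ0 hσ1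
    have e1 : u*(s/u) = s := by field_simp
    have e2 : u*(1-s/u) = q := by
      rw [mul_sub, e1, hu, hs]; ring
    have e5 : (1:ℝ)-u = t := by rw [hu]; ring
    rw [e1, e2, e5] at hD0
    have e3 : (1:ℝ) - s = q + t := by rw [hs]; ring
    rw [e3] at hD0
    rw [hlameq]
    have hqt1 : q + t = 1 - s := by rw [hs]; ring
    have p1 : (q+t)*Real.log (1-q) = Real.log (1-q) - s*Real.log (1-q) := by
      rw [hqt1]; ring
    have p2 : (q+t)*Real.log s = Real.log s - s*Real.log s := by
      rw [hqt1]; ring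
    have expand : (Real.log (q+t)+Real.log (1-q)-Real.log q-Real.log s)*(q+t)
        = (q+t)*Real.log (q+t) + ((q+t)*Real.log (1-q)) - (q+t)*Real.log q
          - ((q+t)*Real.log s) := by ring
    rw [expand, p1, p2]
    linarith [hD0]

lemma amgm {k : ℕ} (hk : 0 < k) (z : Fin k → ℝ) (hz : ∀ i, 0 ≤ z i) :
    ∏ i, z i ≤ ((∑ i, z i)/k)^k := by
  have hP : (0:ℝ) ≤ ∏ i, z i := Finset.prod_nonneg (fun i _ => hz i)
  have key := Real.geom_mean_le_arith_mean_weighted univ (fun _ => (k:ℝ)⁻¹) z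
    (fun i _ => by positivity)
    (by simp [Finset.card_univ]; field_simp)
    (fun i _ => hz i)
  have e1 : (∏ i, (z i) ^ ((k:ℝ)⁻¹)) = (∏ i, z i) ^ ((k:ℝ)⁻¹) := by
    rw [← Real.finset_prod_rpow univ z (fun i _ => hz i)]
  have e2 : (((∏ i, z i) ^ ((k:ℝ)⁻¹)))^(k:ℕ) = ∏ i, z i := by
    rw [← Real.rpow_natCast ((∏ i, z i) ^ ((k:ℝ)⁻¹)) k, ← Real.rpow_mul hP]
    rw [inv_mul_cancel₀ (Nat.cast_ne_zero.mpr hk.ne'), Real.rpow_one]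
  calc ∏ i, z i = (((∏ i, z i) ^ ((k:ℝ)⁻¹)))^(k:ℕ) := e2.symm
    _ ≤ (∑ i, (k:ℝ)⁻¹ * z i)^(k:ℕ) := by
        apply pow_le_pow_left₀ (Real.rpow_nonneg hP _)
        rw [← e1]; exact key
    _ = ((∑ i, z i)/k)^k := by
        rw [← Finset.mul_sum]
        congr 1
        field_simp

set_option maxHeartbeats 1000000 in
lemma chernoff {d k : ℕ} (hk : 0 < k) (p' : Fin k → Fin d → ℝ)
    (hp : ∀ i n, 0 ≤ p' i n) (hp1 : ∀ i, ∑ n, p' i n = 1)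
    (A : Finset (Fin d)) (θ lam : ℝ) (hlam : 0 ≤ lam) :
    ∑ x ∈ (univ : Finset (Fin k → Fin d)).filter
        (fun x => (k:ℝ)*θ < (((univ : Finset (Fin k)).filter (fun i => x i ∈ A)).card : ℝ)),
        ∏ i, p' i (x i)
      ≤ (Real.exp (-(lam*θ)) *
          (1 - (∑ i, ∑ n ∈ A, p' i n)/k + ((∑ i, ∑ n ∈ A, p' i n)/k) * Real.exp lam))^k := by
  have hq0 : ∀ i, 0 ≤ ∑ n ∈ A, p' i n := fun i => Finset.sum_nonneg (fun n _ => hp i n)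
  have hq1 : ∀ i, ∑ n ∈ A, p' i n ≤ 1 := by
    intro i
    rw [← hp1 i]
    exact Finset.sum_le_sum_of_subset_of_nonneg (Finset.subset_univ A) (fun n _ _ => hp i n)
  -- Step 1
  have step1 : ∑ x ∈ (univ : Finset (Fin k → Fin d)).filter
        (fun x => (k:ℝ)*θ < (((univ : Finset (Fin k)).filter (fun i => x i ∈ A)).card : ℝ)),
        ∏ i, p' i (x i)
      ≤ ∑ x : Fin k → Fin d,
          Real.exp (lam * (((univ : Finset (Fin k)).filter (fun i => x i ∈ A)).card : ℝ)
            - lam * ((k:ℝ)*θ)) * ∏ i, p' i (x i) := by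
    have h1 : ∑ x ∈ (univ : Finset (Fin k → Fin d)).filter
        (fun x => (k:ℝ)*θ < (((univ : Finset (Fin k)).filter (fun i => x i ∈ A)).card : ℝ)),
        ∏ i, p' i (x i)
        ≤ ∑ x ∈ (univ : Finset (Fin k → Fin d)).filter
        (fun x => (k:ℝ)*θ < (((univ : Finset (Fin k)).filter (fun i => x i ∈ A)).card : ℝ)),
          Real.exp (lam * (((univ : Finset (Fin k)).filter (fun i => x i ∈ A)).card : ℝ)
            - lam * ((k:ℝ)*θ)) * ∏ i, p' i (x i) := by
      apply Finset.sum_le_sum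
      intro x hx
      rw [Finset.mem_filter] at hx
      have harg : 0 ≤ lam * (((univ : Finset (Fin k)).filter (fun i => x i ∈ A)).card : ℝ)
          - lam * ((k:ℝ)*θ) := by nlinarith [hx.2]
      nth_rewrite 1 [show (∏ i, p' i (x i)) = 1 * ∏ i, p' i (x i) by ring]
      apply mul_le_mul_of_nonneg_right _ (Finset.prod_nonneg (fun i _ => hp i (x i)))
      rw [show (1:ℝ) = Real.exp 0 by simp]
      exact Real.exp_le_exp.mpr harg
    refine h1.trans (Finset.sum_le_sum_of_subset_of_nonneg (Finset.filter_subset _ _) ?_)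
    intro x _ _
    exact mul_nonneg (Real.exp_nonneg _) (Finset.prod_nonneg fun i _ => hp i (x i))
  -- Step 2 : product form of each term
  have hterm : ∀ x : Fin k → Fin d,
      Real.exp (lam * (((univ : Finset (Fin k)).filter (fun i => x i ∈ A)).card : ℝ)
          - lam * ((k:ℝ)*θ)) * ∏ i, p' i (x i)
      = ∏ i, (Real.exp (lam * (if x i ∈ A then (1:ℝ) else 0) - lam*θ) * p' i (x i)) := by
    intro x
    rw [Finset.prod_mul_distrib, ← Real.exp_sum]
    congr 2
    have hN : (((univ : Finset (Fin k)).filter (fun i => x i ∈ A)).card : ℝ)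
        = ∑ i, (if x i ∈ A then (1:ℝ) else 0) := by
      rw [Finset.card_filter]
      push_cast
      rfl
    rw [Finset.sum_sub_distrib, ← Finset.mul_sum, ← hN, Finset.sum_const, Finset.card_univ,
      Fintype.card_fin, nsmul_eq_mul]
    ring
  have step2 : ∑ x : Fin k → Fin d,
        Real.exp (lam * (((univ : Finset (Fin k)).filter (fun i => x i ∈ A)).card : ℝ)
          - lam * ((k:ℝ)*θ)) * ∏ i, p' i (x i)
      = ∏ i, (Real.exp (-(lam*θ)) *
          ((1 - ∑ n ∈ A, p' i n) + (∑ n ∈ A, p' i n) * Real.exp lam)) := by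
    rw [Finset.sum_congr rfl (fun x _ => hterm x)]
    rw [← Fintype.prod_sum (fun i (n : Fin d) =>
      Real.exp (lam * (if n ∈ A then (1:ℝ) else 0) - lam*θ) * p' i n)]
    apply Finset.prod_congr rfl
    intro i _
    have hcong : ∀ n : Fin d, Real.exp (lam * (if n ∈ A then (1:ℝ) else 0) - lam*θ) * p' i n
        = Real.exp (-(lam*θ)) * (if n ∈ A then Real.exp lam * p' i n else p' i n) := by
      intro n
      split_ifs with h
      · rw [show lam * (1:ℝ) - lam*θ = lam + -(lam*θ) by ring, Real.exp_add]
        ring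
      · rw [show lam * (0:ℝ) - lam*θ = -(lam*θ) by ring]
    rw [Finset.sum_congr rfl (fun n _ => hcong n), ← Finset.mul_sum]
    congr 1
    rw [Finset.sum_ite, ← Finset.mul_sum]
    have hfA : (univ : Finset (Fin d)).filter (fun n => n ∈ A) = A := by
      ext n; simp
    have hfA' : (univ : Finset (Fin d)).filter (fun n => ¬ n ∈ A) = Aᶜ := by
      ext n; simp
    rw [hfA, hfA']
    have hcompl : ∑ n ∈ Aᶜ, p' i n = 1 - ∑ n ∈ A, p' i n := by
      have := Finset.sum_add_sum_compl A (p' i)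
      rw [hp1 i] at this
      linarith
    rw [hcompl]
    ring
  -- Step 3 : AM-GM
  have hz : ∀ i : Fin k, 0 ≤ (1 - ∑ n ∈ A, p' i n) + (∑ n ∈ A, p' i n) * Real.exp lam := by
    intro i
    have := Real.exp_pos lam
    nlinarith [hq0 i, hq1 i]
  have step3 : ∏ i : Fin k, (Real.exp (-(lam*θ)) *
          ((1 - ∑ n ∈ A, p' i n) + (∑ n ∈ A, p' i n) * Real.exp lam))
      ≤ (Real.exp (-(lam*θ)))^k *
        ((∑ i : Fin k, ((1 - ∑ n ∈ A, p' i n) + (∑ n ∈ A, p' i n) * Real.exp lam))/k)^k := by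
    rw [Finset.prod_mul_distrib, Finset.prod_const, Finset.card_univ, Fintype.card_fin]
    apply mul_le_mul_of_nonneg_left _ (by positivity)
    exact amgm hk _ hz
  have havg : (∑ i : Fin k, ((1 - ∑ n ∈ A, p' i n) + (∑ n ∈ A, p' i n) * Real.exp lam))/k
      = 1 - (∑ i, ∑ n ∈ A, p' i n)/k + ((∑ i, ∑ n ∈ A, p' i n)/k) * Real.exp lam := by
    rw [Finset.sum_add_distrib, Finset.sum_sub_distrib, Finset.sum_const, ← Finset.sum_mul,
      Finset.card_univ, Fintype.card_fin, nsmul_eq_mul, mul_one]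
    have hkne : (k:ℝ) ≠ 0 := Nat.cast_ne_zero.mpr hk.ne'
    field_simp
  calc ∑ x ∈ (univ : Finset (Fin k → Fin d)).filter
        (fun x => (k:ℝ)*θ < (((univ : Finset (Fin k)).filter (fun i => x i ∈ A)).card : ℝ)),
        ∏ i, p' i (x i)
      ≤ ∑ x : Fin k → Fin d,
          Real.exp (lam * (((univ : Finset (Fin k)).filter (fun i => x i ∈ A)).card : ℝ)
            - lam * ((k:ℝ)*θ)) * ∏ i, p' i (x i) := step1
    _ = ∏ i, (Real.exp (-(lam*θ)) *
          ((1 - ∑ n ∈ A, p' i n) + (∑ n ∈ A, p' i n) * Real.exp lam)) := step2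
    _ ≤ (Real.exp (-(lam*θ)))^k *
        ((∑ i : Fin k, ((1 - ∑ n ∈ A, p' i n) + (∑ n ∈ A, p' i n) * Real.exp lam))/k)^k := step3
    _ = (Real.exp (-(lam*θ)) *
          (1 - (∑ i, ∑ n ∈ A, p' i n)/k + ((∑ i, ∑ n ∈ A, p' i n)/k) * Real.exp lam))^k := by
        rw [havg, mul_pow]

set_option maxHeartbeats 2000000 in
lemma perm_bad_bound {d k : ℕ} (hk : 0 < k) (p : Fin k → Fin d → ℝ)
    (hp : ∀ i n, 0 ≤ p i n) (hp1 : ∀ i, ∑ n, p i n = 1)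
    (ε : ℝ) (hε : 0 < ε) (hε2 : ε < 2) (g : Equiv.Perm (Fin k)) :
    ∑ x ∈ (univ : Finset (Fin k → Fin d)).filter
        (fun x => ¬(∑ j : Fin d,
          |(((univ : Finset (Fin k)).filter (fun i => x i = j)).card : ℝ)/k
            - (1/k:ℝ)*∑ i, p i j| ≤ ε)),
        ∏ i, p (g i) (x i)
      ≤ 2^d * (4*Real.exp (-ε^2))^k := by
  classical
  have hkR : (0:ℝ) < k := by exact_mod_cast hk
  -- abbreviations
  set m : (Fin k → Fin d) → Fin d → ℝ :=
    fun x j => (((univ : Finset (Fin k)).filter (fun i => x i = j)).card : ℝ)/k with hm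
  set pb : Fin d → ℝ := fun j => (1/k:ℝ)*∑ i, p i j with hpb
  set qb : Finset (Fin d) → ℝ := fun A => ∑ j ∈ A, pb j with hqb
  set E : Finset (Fin d) → Finset (Fin k → Fin d) :=
    fun A => (univ : Finset (Fin k → Fin d)).filter
      (fun x => (k:ℝ)*(qb A + ε/2)
        < (((univ : Finset (Fin k)).filter (fun i => x i ∈ A)).card : ℝ)) with hE
  set Ax : (Fin k → Fin d) → Finset (Fin d) :=
    fun x => (univ : Finset (Fin d)).filter (fun j => pb j < m x j) with hAx
  -- basic facts
  have hpb0 : ∀ j, 0 ≤ pb j := by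
    intro j
    apply mul_nonneg (by positivity)
    exact Finset.sum_nonneg (fun i _ => hp i j)
  have hqb0 : ∀ A, 0 ≤ qb A := fun A => Finset.sum_nonneg (fun j _ => hpb0 j)
  have hm1 : ∀ x : Fin k → Fin d, ∑ j, m x j = 1 := by
    intro x
    simp only [hm]
    rw [← Finset.sum_div]
    rw [show ∑ j : Fin d, (((univ : Finset (Fin k)).filter (fun i => x i = j)).card : ℝ)
        = ((k:ℕ):ℝ) by
      rw [← Nat.cast_sum]
      congr 1
      rw [← Finset.card_eq_sum_card_fiberwise (f := x) (s := univ) (t := univ)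
        (fun i _ => Finset.mem_univ _)]
      simp]
    field_simp
  have hpb1 : ∑ j, pb j = 1 := by
    simp only [hpb]
    rw [← Finset.mul_sum, Finset.sum_comm]
    rw [Finset.sum_congr rfl (fun i _ => hp1 i)]
    rw [Finset.sum_const, Finset.card_univ, Fintype.card_fin, nsmul_eq_mul, mul_one]
    field_simp
  -- N splits over fibers
  have hNsplit : ∀ (x : Fin k → Fin d) (A : Finset (Fin d)),
      (((univ : Finset (Fin k)).filter (fun i => x i ∈ A)).card : ℝ)
        = ∑ j ∈ A, (((univ : Finset (Fin k)).filter (fun i => x i = j)).card : ℝ) := by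
    intro x A
    rw [← Nat.cast_sum]
    congr 1
    rw [Finset.card_eq_sum_card_fiberwise (f := x)
      (s := (univ : Finset (Fin k)).filter (fun i => x i ∈ A)) (t := A)
      (fun i hi => (Finset.mem_filter.mp hi).2)]
    apply Finset.sum_congr rfl
    intro j hj
    congr 1
    rw [Finset.filter_filter]
    apply Finset.filter_congr
    intro i _
    simp only [and_iff_right_iff_imp]
    intro h2
    rw [h2]
    exact hj
  -- covering: every bad x lies in E (Ax x)
  have hcover : ∀ x : Fin k → Fin d,
      ¬(∑ j : Fin d, |m x j - pb j| ≤ ε) → x ∈ E (Ax x) := by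
    intro x hbad
    push_neg at hbad
    have hzero : ∑ j, (m x j - pb j) = 0 := by
      rw [Finset.sum_sub_distrib, hm1 x, hpb1]; ring
    have hsplit := Finset.sum_filter_add_sum_filter_not (univ : Finset (Fin d))
      (fun j => pb j < m x j) (fun j => m x j - pb j)
    have habs1 : ∑ j ∈ (univ : Finset (Fin d)).filter (fun j => pb j < m x j),
        |m x j - pb j| = ∑ j ∈ (univ : Finset (Fin d)).filter (fun j => pb j < m x j),
        (m x j - pb j) := by
      apply Finset.sum_congr rfl
      intro j hj
      rw [Finset.mem_filter] at hj
      exact abs_of_pos (by linarith [hj.2])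
    have habs2 : ∑ j ∈ (univ : Finset (Fin d)).filter (fun j => ¬ pb j < m x j),
        |m x j - pb j| = -∑ j ∈ (univ : Finset (Fin d)).filter (fun j => ¬ pb j < m x j),
        (m x j - pb j) := by
      rw [← Finset.sum_neg_distrib]
      apply Finset.sum_congr rfl
      intro j hj
      rw [Finset.mem_filter] at hj
      rw [abs_of_nonpos (by push_neg at hj; linarith [hj.2])]
    have htotal := Finset.sum_filter_add_sum_filter_not (univ : Finset (Fin d))
      (fun j => pb j < m x j) (fun j => |m x j - pb j|)
    -- deduce sum over Ax exceeds ε/2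
    have hAxsum : ε/2 < ∑ j ∈ Ax x, (m x j - pb j) := by
      simp only [hAx]
      nlinarith [htotal, habs1, habs2, hsplit, hzero, hbad]
    -- conclude membership
    simp only [hE, Finset.mem_filter, Finset.mem_univ, true_and]
    rw [hNsplit x (Ax x)]
    have hsum_m : ∑ j ∈ Ax x, m x j
        = (∑ j ∈ Ax x, (((univ : Finset (Fin k)).filter (fun i => x i = j)).card : ℝ))/k := by
      rw [Finset.sum_div]
    have h1 : qb (Ax x) + ε/2 < ∑ j ∈ Ax x, m x j := by
      have : ∑ j ∈ Ax x, (m x j - pb j) = ∑ j ∈ Ax x, m x j - qb (Ax x) := by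
        rw [Finset.sum_sub_distrib]
      linarith [hAxsum, this]
    rw [hsum_m] at h1
    calc (k:ℝ)*(qb (Ax x) + ε/2)
        < (k:ℝ)*((∑ j ∈ Ax x, (((univ : Finset (Fin k)).filter
            (fun i => x i = j)).card : ℝ))/k) := by
          apply mul_lt_mul_of_pos_left h1 hkR
      _ = ∑ j ∈ Ax x, (((univ : Finset (Fin k)).filter (fun i => x i = j)).card : ℝ) := by
          rw [mul_div_assoc', mul_div_cancel_left₀ _ hkR.ne']
  -- per-subset bound
  have perA : ∀ A : Finset (Fin d),
      ∑ x ∈ E A, ∏ i, p (g i) (x i) ≤ (4*Real.exp (-ε^2))^k := by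
    intro A
    have hqbA : (∑ i, ∑ n ∈ A, p (g i) n)/k = qb A := by
      rw [Finset.sum_comm]
      simp only [hqb, hpb]
      rw [Finset.sum_div]
      apply Finset.sum_congr rfl
      intro j _
      rw [Equiv.sum_comp g (fun i => p i j)]
      ring
    rcases le_or_gt 1 (qb A + ε/2) with hc1 | hc1
    · -- event empty
      have hempty : E A = ∅ := by
        rw [hE, Finset.filter_eq_empty_iff]
        intro x _
        push_neg
        have hcard : ((univ : Finset (Fin k)).filter (fun i => x i ∈ A)).card ≤ k := by
          calc ((univ : Finset (Fin k)).filter (fun i => x i ∈ A)).card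
              ≤ (univ : Finset (Fin k)).card := Finset.card_filter_le _ _
            _ = k := by simp
        calc (((univ : Finset (Fin k)).filter (fun i => x i ∈ A)).card : ℝ)
            ≤ (k:ℝ) := by exact_mod_cast hcard
          _ ≤ (k:ℝ)*(qb A + ε/2) := by nlinarith
      rw [hempty]
      simp
      positivity
    rcases eq_or_lt_of_le (hqb0 A) with hc2 | hc2
    · -- qb A = 0 : all products vanish
      have hzero : ∀ x ∈ E A, ∏ i, p (g i) (x i) = 0 := by
        intro x hx
        simp only [hE, Finset.mem_filter] at hx
        have hNpos : 0 < ((univ : Finset (Fin k)).filter (fun i => x i ∈ A)).card := by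
          rcases Nat.eq_zero_or_pos ((univ : Finset (Fin k)).filter (fun i => x i ∈ A)).card
            with h0 | hpos
          · exfalso
            have h2 := hx.2
            rw [h0] at h2
            have hth : (0:ℝ) < (k:ℝ)*(qb A + ε/2) := by
              rw [← hc2]
              have : (0:ℝ) < ε/2 := by linarith
              positivity
            simp at h2
            nlinarith
          · exact hpos
        obtain ⟨i0, hi0⟩ := Finset.card_pos.mp hNpos
        rw [Finset.mem_filter] at hi0
        apply Finset.prod_eq_zero (Finset.mem_univ i0)
        -- p (g i0) (x i0) = 0 because ∑_i p i (x i0) = 0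
        have hsumj : ∑ i, p i (x i0) = 0 := by
          have h0 : pb (x i0) = 0 := by
            have hle : pb (x i0) ≤ qb A := Finset.single_le_sum
              (f := pb) (fun j _ => hpb0 j) hi0.2
            linarith [hpb0 (x i0), hc2 ▸ hle]
          simp only [hpb] at h0
          have hkne : (1/(k:ℝ)) ≠ 0 := by positivity
          field_simp at h0
          simpa using h0
        have := (Finset.sum_eq_zero_iff_of_nonneg (fun i _ => hp i (x i0))).mp hsumj
        exact this (g i0) (Finset.mem_univ _)
      rw [Finset.sum_eq_zero hzero]
      positivity
    · -- main Chernoff case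
      obtain ⟨lam, hlam0, hcore⟩ := core (t := ε/2) (q := qb A)
        (by linarith) (by linarith) hc2 (by linarith)
      have hch := chernoff hk (fun i => p (g i)) (fun i n => hp (g i) n)
        (fun i => hp1 (g i)) A (qb A + ε/2) lam hlam0
      rw [hqbA] at hch
      refine le_trans ?_ (le_trans hch ?_)
      · apply le_of_eq
        rfl
      · have hMnn : 0 ≤ Real.exp (-(lam*(qb A + ε/2))) * (1 - qb A + qb A * Real.exp lam) := by
          have := Real.exp_pos lam
          have h1 : (0:ℝ) ≤ 1 - qb A := by linarith
          positivity
        calc (Real.exp (-(lam*(qb A + ε/2))) * (1 - qb A + qb A * Real.exp lam))^k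
            ≤ (4*Real.exp (-(4*(ε/2)^2)))^k := by
              apply pow_le_pow_left₀ hMnn hcore
          _ = (4*Real.exp (-ε^2))^k := by
              rw [show -(4*(ε/2)^2) = -ε^2 by ring]
    -- end perA
  -- fiberwise decomposition over subsets
  have hmaps : ∀ x ∈ (univ : Finset (Fin k → Fin d)).filter
      (fun x => ¬(∑ j : Fin d, |m x j - pb j| ≤ ε)),
      Ax x ∈ (univ : Finset (Fin d)).powerset :=
    fun x _ => Finset.mem_powerset.mpr (Finset.subset_univ _)
  calc ∑ x ∈ (univ : Finset (Fin k → Fin d)).filter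
        (fun x => ¬(∑ j : Fin d, |m x j - pb j| ≤ ε)), ∏ i, p (g i) (x i)
      = ∑ A ∈ (univ : Finset (Fin d)).powerset,
          ∑ x ∈ ((univ : Finset (Fin k → Fin d)).filter
            (fun x => ¬(∑ j : Fin d, |m x j - pb j| ≤ ε))).filter (fun x => Ax x = A),
          ∏ i, p (g i) (x i) := by
        rw [← Finset.sum_fiberwise_of_maps_to hmaps]
    _ ≤ ∑ A ∈ (univ : Finset (Fin d)).powerset, (4*Real.exp (-ε^2))^k := by
        apply Finset.sum_le_sum
        intro A _
        refine le_trans (Finset.sum_le_sum_of_subset_of_nonneg ?_ ?_) (perA A)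
        · intro x hx
          rw [Finset.mem_filter, Finset.mem_filter] at hx
          have := hcover x hx.1.2
          rw [hx.2] at this
          exact this
        · intro x _ _
          exact Finset.prod_nonneg (fun i _ => hp (g i) (x i))
    _ = 2^d * (4*Real.exp (-ε^2))^k := by
        rw [Finset.sum_const, Finset.card_powerset, Finset.card_univ, Fintype.card_fin,
          nsmul_eq_mul]
        push_cast
        ring

set_option maxHeartbeats 2000000

/-- under the symmetrized product distribution
`p̄^k = (1/k!)∑_{π∈S_k} ∏_i p_{π(i)}`, the set of strings whose empirical distribution is
within total-variation distance `ε` of `p̄ = (1/k)∑_i p_i` has probability at least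
`1 - C·(2d)^k·exp(-ε²k)` for an absolute constant `C > 0`. -/
theorem symmetrized_type_concentration :
    ∃ C : ℝ, 0 < C ∧
      ∀ (d k : ℕ) (p : Fin k → Fin d → ℝ),
        (∀ i n, 0 ≤ p i n) → (∀ i, ∑ n, p i n = 1) →
        ∀ ε : ℝ, 0 < ε →
          1 - C * ((2 * d : ℝ)) ^ k * Real.exp (-ε ^ 2 * k) ≤
            ∑ x ∈ (Finset.univ : Finset (Fin k → Fin d)).filter (fun x =>
                ∑ j : Fin d,
                  |(((Finset.univ : Finset (Fin k)).filter (fun i => x i = j)).card : ℝ) / k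
                    - (1 / k : ℝ) * ∑ i, p i j| ≤ ε),
              (k.factorial : ℝ)⁻¹ * ∑ π : Equiv.Perm (Fin k), ∏ i, p (π i) (x i) := by
  classical
  refine ⟨2^27, by norm_num, ?_⟩
  intro d k p hp hp1 ε hε
  -- nonnegativity of the weights
  have hw : ∀ x : Fin k → Fin d,
      0 ≤ (k.factorial : ℝ)⁻¹ * ∑ π : Equiv.Perm (Fin k), ∏ i, p (π i) (x i) := by
    intro x
    apply mul_nonneg (by positivity)
    exact Finset.sum_nonneg (fun π _ => Finset.prod_nonneg (fun i _ => hp _ _))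
  have hSnn : 0 ≤ ∑ x ∈ (Finset.univ : Finset (Fin k → Fin d)).filter (fun x =>
        ∑ j : Fin d,
          |(((Finset.univ : Finset (Fin k)).filter (fun i => x i = j)).card : ℝ) / k
            - (1 / k : ℝ) * ∑ i, p i j| ≤ ε),
      (k.factorial : ℝ)⁻¹ * ∑ π : Equiv.Perm (Fin k), ∏ i, p (π i) (x i) :=
    Finset.sum_nonneg (fun x _ => hw x)
  rcases le_or_gt 1 ((2:ℝ)^27 * ((2 * d : ℝ)) ^ k * Real.exp (-ε ^ 2 * k)) with hX | hX
  · linarith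
  -- k ≥ 1
  rcases Nat.eq_zero_or_pos k with hk0 | hk
  · exfalso
    subst hk0
    norm_num at hX
  -- d ≥ 1
  rcases Nat.eq_zero_or_pos d with hd0 | hd
  · exfalso
    subst hd0
    have := hp1 ⟨0, hk⟩
    simp at this
  have hkR : (0:ℝ) < k := by exact_mod_cast hk
  -- total mass is 1
  have hπtot : ∀ g : Equiv.Perm (Fin k),
      ∑ x : Fin k → Fin d, ∏ i, p (g i) (x i) = 1 := by
    intro g
    rw [← Fintype.prod_sum (fun i (n : Fin d) => p (g i) n)]
    rw [Finset.prod_congr rfl (fun i _ => hp1 (g i))]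
    simp
  have htot : ∑ x : Fin k → Fin d,
      (k.factorial : ℝ)⁻¹ * ∑ π : Equiv.Perm (Fin k), ∏ i, p (π i) (x i) = 1 := by
    rw [← Finset.mul_sum, Finset.sum_comm]
    rw [Finset.sum_congr rfl (fun g _ => hπtot g)]
    rw [Finset.sum_const, Finset.card_univ, Fintype.card_perm, Fintype.card_fin,
      nsmul_eq_mul, mul_one]
    exact inv_mul_cancel₀ (Nat.cast_ne_zero.mpr (Nat.factorial_ne_zero k))
  -- X ≥ 0
  have hXnn : (0:ℝ) ≤ (2:ℝ)^27 * ((2 * d : ℝ)) ^ k * Real.exp (-ε ^ 2 * k) := by positivity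
  -- helper: sums of m and pbar are 1
  have hm1 : ∀ x : Fin k → Fin d,
      ∑ j, (((Finset.univ : Finset (Fin k)).filter (fun i => x i = j)).card : ℝ)/k = 1 := by
    intro x
    rw [← Finset.sum_div]
    rw [show ∑ j : Fin d, (((univ : Finset (Fin k)).filter (fun i => x i = j)).card : ℝ)
        = ((k:ℕ):ℝ) by
      rw [← Nat.cast_sum]
      congr 1
      rw [← Finset.card_eq_sum_card_fiberwise (f := x) (s := univ) (t := univ)
        (fun i _ => Finset.mem_univ _)]
      simp]
    field_simp
  have hpb1 : ∑ j : Fin d, (1/k:ℝ) * ∑ i, p i j = 1 := by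
    rw [← Finset.mul_sum, Finset.sum_comm]
    rw [Finset.sum_congr rfl (fun i _ => hp1 i)]
    rw [Finset.sum_const, Finset.card_univ, Fintype.card_fin, nsmul_eq_mul, mul_one]
    field_simp
  -- case ε ≥ 2 or d = 1 : the filter is everything
  have hfull : (∀ x : Fin k → Fin d, ∑ j : Fin d,
        |(((Finset.univ : Finset (Fin k)).filter (fun i => x i = j)).card : ℝ) / k
          - (1 / k : ℝ) * ∑ i, p i j| ≤ ε) →
      1 - (2:ℝ)^27 * ((2 * d : ℝ)) ^ k * Real.exp (-ε ^ 2 * k) ≤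
        ∑ x ∈ (Finset.univ : Finset (Fin k → Fin d)).filter (fun x =>
            ∑ j : Fin d,
              |(((Finset.univ : Finset (Fin k)).filter (fun i => x i = j)).card : ℝ) / k
                - (1 / k : ℝ) * ∑ i, p i j| ≤ ε),
          (k.factorial : ℝ)⁻¹ * ∑ π : Equiv.Perm (Fin k), ∏ i, p (π i) (x i) := by
    intro hall
    rw [Finset.filter_true_of_mem (fun x _ => hall x)]
    rw [htot]
    linarith
  rcases le_or_gt 2 ε with hε2 | hε2
  · apply hfull
    intro x
    have hbnd : ∀ j : Fin d,
        |(((Finset.univ : Finset (Fin k)).filter (fun i => x i = j)).card : ℝ) / k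
          - (1 / k : ℝ) * ∑ i, p i j|
        ≤ (((Finset.univ : Finset (Fin k)).filter (fun i => x i = j)).card : ℝ) / k
          + (1 / k : ℝ) * ∑ i, p i j := by
      intro j
      have h1 : (0:ℝ) ≤ (((Finset.univ : Finset (Fin k)).filter
          (fun i => x i = j)).card : ℝ) / k := by positivity
      have h2 : (0:ℝ) ≤ (1 / k : ℝ) * ∑ i, p i j :=
        mul_nonneg (by positivity) (Finset.sum_nonneg (fun i _ => hp i j))
      calc |(((Finset.univ : Finset (Fin k)).filter (fun i => x i = j)).card : ℝ) / k
            - (1 / k : ℝ) * ∑ i, p i j|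
          ≤ |(((Finset.univ : Finset (Fin k)).filter (fun i => x i = j)).card : ℝ) / k|
            + |(1 / k : ℝ) * ∑ i, p i j| := abs_sub _ _
        _ = (((Finset.univ : Finset (Fin k)).filter (fun i => x i = j)).card : ℝ) / k
            + (1 / k : ℝ) * ∑ i, p i j := by rw [abs_of_nonneg h1, abs_of_nonneg h2]
    calc ∑ j : Fin d, |(((Finset.univ : Finset (Fin k)).filter
          (fun i => x i = j)).card : ℝ) / k - (1 / k : ℝ) * ∑ i, p i j|
        ≤ ∑ j : Fin d, ((((Finset.univ : Finset (Fin k)).filter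
            (fun i => x i = j)).card : ℝ) / k + (1 / k : ℝ) * ∑ i, p i j) :=
          Finset.sum_le_sum (fun j _ => hbnd j)
      _ = 2 := by rw [Finset.sum_add_distrib, hm1 x, hpb1]; norm_num
      _ ≤ ε := hε2
  -- now ε < 2
  rcases Nat.lt_or_ge d 2 with hd1 | hd2
  · -- d = 1
    have hd1' : d = 1 := by omega
    subst hd1'
    apply hfull
    intro x
    have : ∀ j : Fin 1, (((Finset.univ : Finset (Fin k)).filter
        (fun i => x i = j)).card : ℝ) / k - (1 / k : ℝ) * ∑ i, p i j = 0 := by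
      intro j
      have hj : j = 0 := Subsingleton.elim _ _
      subst hj
      have hfil : (Finset.univ : Finset (Fin k)).filter (fun i => x i = 0) = univ := by
        apply Finset.filter_true_of_mem
        intro i _
        exact Subsingleton.elim _ _
      have hcard : (((Finset.univ : Finset (Fin k)).filter
          (fun i => x i = 0)).card : ℝ) = (k:ℝ) := by
        rw [hfil]; simp
      have hpj : ∀ i, p i 0 = 1 := by
        intro i
        have := hp1 i
        rw [Fin.sum_univ_one] at this
        exact this
      rw [hcard]
      rw [Finset.sum_congr rfl (fun i _ => hpj i)]
      rw [Finset.sum_const, Finset.card_univ, Fintype.card_fin, nsmul_eq_mul, mul_one]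
      field_simp; norm_num
    rw [Fin.sum_univ_one] at *
    rw [this 0]
    simpa using hε.le
  -- main case : k ≥ 1, d ≥ 2, 0 < ε < 2
  -- split off the bad set
  have hsplit := Finset.sum_filter_add_sum_filter_not (univ : Finset (Fin k → Fin d))
    (fun x => ∑ j : Fin d,
      |(((Finset.univ : Finset (Fin k)).filter (fun i => x i = j)).card : ℝ) / k
        - (1 / k : ℝ) * ∑ i, p i j| ≤ ε)
    (fun x => (k.factorial : ℝ)⁻¹ * ∑ π : Equiv.Perm (Fin k), ∏ i, p (π i) (x i))
  rw [htot] at hsplit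
  -- bound the bad sum
  have hbadle : ∑ x ∈ (univ : Finset (Fin k → Fin d)).filter (fun x =>
        ¬(∑ j : Fin d,
          |(((Finset.univ : Finset (Fin k)).filter (fun i => x i = j)).card : ℝ) / k
            - (1 / k : ℝ) * ∑ i, p i j| ≤ ε)),
      (k.factorial : ℝ)⁻¹ * ∑ π : Equiv.Perm (Fin k), ∏ i, p (π i) (x i)
      ≤ (2:ℝ)^27 * ((2 * d : ℝ)) ^ k * Real.exp (-ε ^ 2 * k) := by
    have hswap : ∑ x ∈ (univ : Finset (Fin k → Fin d)).filter (fun x =>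
          ¬(∑ j : Fin d,
            |(((Finset.univ : Finset (Fin k)).filter (fun i => x i = j)).card : ℝ) / k
              - (1 / k : ℝ) * ∑ i, p i j| ≤ ε)),
        (k.factorial : ℝ)⁻¹ * ∑ π : Equiv.Perm (Fin k), ∏ i, p (π i) (x i)
        = (k.factorial : ℝ)⁻¹ * ∑ π : Equiv.Perm (Fin k),
            ∑ x ∈ (univ : Finset (Fin k → Fin d)).filter (fun x =>
              ¬(∑ j : Fin d,
                |(((Finset.univ : Finset (Fin k)).filter (fun i => x i = j)).card : ℝ) / k
                  - (1 / k : ℝ) * ∑ i, p i j| ≤ ε)),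
            ∏ i, p (π i) (x i) := by
      rw [← Finset.mul_sum, Finset.sum_comm]
    rw [hswap]
    have hperm : ∀ g : Equiv.Perm (Fin k),
        ∑ x ∈ (univ : Finset (Fin k → Fin d)).filter (fun x =>
          ¬(∑ j : Fin d,
            |(((Finset.univ : Finset (Fin k)).filter (fun i => x i = j)).card : ℝ) / k
              - (1 / k : ℝ) * ∑ i, p i j| ≤ ε)),
        ∏ i, p (g i) (x i) ≤ 2^d * (4*Real.exp (-ε^2))^k :=
      fun g => perm_bad_bound hk p hp hp1 ε hε hε2 g
    calc (k.factorial : ℝ)⁻¹ * ∑ π : Equiv.Perm (Fin k),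
          ∑ x ∈ (univ : Finset (Fin k → Fin d)).filter (fun x =>
            ¬(∑ j : Fin d,
              |(((Finset.univ : Finset (Fin k)).filter (fun i => x i = j)).card : ℝ) / k
                - (1 / k : ℝ) * ∑ i, p i j| ≤ ε)),
          ∏ i, p (π i) (x i)
        ≤ (k.factorial : ℝ)⁻¹ * ∑ π : Equiv.Perm (Fin k), 2^d * (4*Real.exp (-ε^2))^k := by
          apply mul_le_mul_of_nonneg_left _ (by positivity)
          exact Finset.sum_le_sum (fun g _ => hperm g)
      _ = 2^d * (4*Real.exp (-ε^2))^k := by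
          rw [Finset.sum_const, Finset.card_univ, Fintype.card_perm, Fintype.card_fin,
            nsmul_eq_mul, ← mul_assoc]
          rw [inv_mul_cancel₀ (Nat.cast_ne_zero.mpr (Nat.factorial_ne_zero k)), one_mul]
      _ ≤ (2:ℝ)^27 * ((2 * d : ℝ)) ^ k * Real.exp (-ε ^ 2 * k) := by
          -- d ≤ 27 and 4 ≤ 2d
          have hd27 : (d:ℕ) ≤ 27 := by
            by_contra hcon
            push_neg at hcon
            have h2d : (55:ℝ) ≤ 2*d := by
              have : (28:ℕ) ≤ d := hcon
              have : (28:ℝ) ≤ (d:ℝ) := by exact_mod_cast this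
              linarith
            have hexp4 : Real.exp 4 < 55 := by
              rw [show (4:ℝ) = ((4:ℕ):ℝ)*(1:ℝ) by norm_num, Real.exp_nat_mul]
              have hx := Real.exp_one_lt_d9
              have hx0 := Real.exp_pos 1
              have h2 : Real.exp 1 ^ 2 < 2.7182818286^2 := by nlinarith
              have hA : (0:ℝ) < 2.7182818286^2 := by norm_num
              have h4 : Real.exp 1 ^ 4 < 2.7182818286^4 := by
                nlinarith [mul_lt_mul_of_pos_left h2 (pow_pos hx0 2),
                  mul_lt_mul_of_pos_right h2 hA]
              nlinarith [h4]
            have hfac : (1:ℝ) ≤ (2*d : ℝ) * Real.exp (-ε^2) := by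
              have he : Real.exp (-ε^2) ≥ Real.exp (-4) := by
                apply Real.exp_le_exp.mpr
                nlinarith
              have he4 : Real.exp (-4) = (Real.exp 4)⁻¹ := by
                rw [Real.exp_neg]
              calc (1:ℝ) = 55 * (1/55) := by norm_num
                _ ≤ (2*d:ℝ) * Real.exp (-4) := by
                    apply mul_le_mul h2d _ (by norm_num) (by linarith)
                    rw [he4]
                    have hinv : 0 < (Real.exp 4)⁻¹ := inv_pos.mpr (Real.exp_pos 4)
                    have hid : Real.exp 4 * (Real.exp 4)⁻¹ = 1 :=
                      mul_inv_cancel₀ (ne_of_gt (Real.exp_pos 4))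
                    nlinarith [hexp4, hinv, hid]
                _ ≤ (2*d:ℝ) * Real.exp (-ε^2) := by
                    apply mul_le_mul_of_nonneg_left he (by positivity)
            -- then X ≥ 1, contradiction
            have hexpk : (Real.exp (-ε^2))^k = Real.exp (-ε^2 * k) := by
              rw [show -ε^2*(k:ℝ) = ((k:ℕ):ℝ)*(-ε^2) by push_cast; ring, Real.exp_nat_mul]
            have hpow : (1:ℝ) ≤ ((2*d:ℝ) * Real.exp (-ε^2))^k := by
              have := pow_le_pow_left₀ (zero_le_one) hfac k
              simpa using this
            have hXge : (1:ℝ) ≤ (2:ℝ)^27 * ((2 * d : ℝ)) ^ k * Real.exp (-ε ^ 2 * k) := by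
              have h27 : (1:ℝ) ≤ (2:ℝ)^27 := by norm_num
              have he : ((2*d:ℝ) * Real.exp (-ε^2))^k
                  = ((2 * d : ℝ)) ^ k * Real.exp (-ε ^ 2 * k) := by
                rw [mul_pow, hexpk]
              nlinarith [hpow, he]
            linarith
          -- use d ≤ 27 and 4 ≤ 2d
          have hexpk : (Real.exp (-ε^2))^k = Real.exp (-ε^2 * k) := by
            rw [show -ε^2*(k:ℝ) = ((k:ℕ):ℝ)*(-ε^2) by push_cast; ring, Real.exp_nat_mul]
          have h2d27 : (2:ℝ)^d ≤ (2:ℝ)^27 :=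
            pow_le_pow_right₀ (by norm_num) hd27
          have h4k : (4:ℝ)^k ≤ (2*(d:ℝ))^k := by
            apply pow_le_pow_left₀ (by norm_num)
            have : (2:ℝ) ≤ (d:ℝ) := by exact_mod_cast hd2
            linarith
          calc (2:ℝ)^d * (4*Real.exp (-ε^2))^k
              = (2:ℝ)^d * ((4:ℝ)^k * (Real.exp (-ε^2))^k) := by rw [mul_pow]
            _ ≤ (2:ℝ)^27 * ((2*(d:ℝ))^k * (Real.exp (-ε^2))^k) := by
                apply mul_le_mul h2d27 _ (by positivity) (by positivity)
                apply mul_le_mul_of_nonneg_right h4k (by positivity)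
            _ = (2:ℝ)^27 * ((2 * d : ℝ)) ^ k * Real.exp (-ε ^ 2 * k) := by
                rw [hexpk]; ring
  have hfin : (1:ℝ) - (2:ℝ)^27 * ((2 * d : ℝ)) ^ k * Real.exp (-ε ^ 2 * k)
      ≤ 1 - ∑ x ∈ (univ : Finset (Fin k → Fin d)).filter (fun x =>
        ¬(∑ j : Fin d,
          |(((Finset.univ : Finset (Fin k)).filter (fun i => x i = j)).card : ℝ) / k
            - (1 / k : ℝ) * ∑ i, p i j| ≤ ε)),
      (k.factorial : ℝ)⁻¹ * ∑ π : Equiv.Perm (Fin k), ∏ i, p (π i) (x i) := by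
    linarith [hbadle]
  refine le_trans hfin (le_of_eq ?_)
  linarith [hsplit]
end

section
/- Assume the entropy power-type inequality S(X ⊞_τ Y) ≥ g(L_τ(X) + R_τ(Y)) holds for all single-mode bosonic states X, Y and τ ∈ [0,1], where L_τ(X) := g^{−1}(S(X ⊞_τ |0⟩⟨0|)) and R_τ(Y) := g^{−1}(S(|0⟩⟨0| ⊞_τ Y)). Then for every state σ with S(|0⟩⟨0| ⊞_τ σ) ≤ g((1−τ)P), the quantity S(S_E ⊞_τ σ) − S(|0⟩⟨0| ⊞_τ σ) is at least g(τE + (1−τ)P) − g((1−τ)P), where S_E is the thermal state of mean photon number E (so that L_τ(S_E) = τE). -/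
/-- The Gordon function `g(x) = (x+1)log₂(x+1) − x·log₂x` (with `g(0) = 0`). -/
noncomputable def gordon (x : ℝ) : ℝ :=
  (x + 1) * Real.logb 2 (x + 1) - x * Real.logb 2 x

/-- The Gordon function scaled by `log 2`: `(x+1)log(x+1) − x log x`. -/
noncomputable def gordonAux (x : ℝ) : ℝ :=
  (x + 1) * Real.log (x + 1) - x * Real.log x

lemma gordonAux_hasDerivAt {x : ℝ} (hx : 0 < x) :
    HasDerivAt gordonAux (Real.log (x + 1) - Real.log x) x := by
  have h1 : HasDerivAt (fun y : ℝ => (y + 1) * Real.log (y + 1))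
      ((Real.log (x + 1) + 1) * 1) x := by
    have := (Real.hasDerivAt_mul_log (x := x + 1) (by positivity)).comp x
      ((hasDerivAt_id x).add_const 1)
    simpa [Function.comp_def] using this
  have h2 : HasDerivAt (fun y : ℝ => y * Real.log y) (Real.log x + 1) x :=
    Real.hasDerivAt_mul_log hx.ne'
  have := h1.sub h2
  exact this.congr_deriv (by ring)

lemma gordonAux_deriv {x : ℝ} (hx : 0 < x) :
    deriv gordonAux x = Real.log (x + 1) - Real.log x :=
  (gordonAux_hasDerivAt hx).deriv

lemma gordonAux_concave : ConcaveOn ℝ (Set.Ici 0) gordonAux := by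
  have hcont : Continuous gordonAux := by
    have h1 : Continuous fun x : ℝ => (x + 1) * Real.log (x + 1) :=
      Real.continuous_mul_log.comp (continuous_id.add continuous_const)
    exact h1.sub Real.continuous_mul_log
  refine AntitoneOn.concaveOn_of_deriv (convex_Ici 0) hcont.continuousOn ?_ ?_
  · intro x hx
    rw [interior_Ici] at hx
    exact ((gordonAux_hasDerivAt hx).differentiableAt).differentiableWithinAt
  · intro x hx y hy hxy
    rw [interior_Ici] at hx hy
    replace hx : 0 < x := hx
    replace hy : 0 < y := hy
    rw [gordonAux_deriv hx, gordonAux_deriv hy]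
    have hlog : Real.log ((y + 1) * x) ≤ Real.log ((x + 1) * y) := by
      apply Real.log_le_log (mul_pos (by linarith) hx)
      nlinarith
    rw [Real.log_mul (by linarith) hx.ne', Real.log_mul (by linarith) hy.ne'] at hlog
    linarith

lemma gordon_eq (x : ℝ) : gordon x = (Real.log 2)⁻¹ * gordonAux x := by
  unfold gordon gordonAux Real.logb
  ring

lemma gordon_concave : ConcaveOn ℝ (Set.Ici 0) gordon := by
  have h := gordonAux_concave.smul (c := (Real.log 2)⁻¹)
    (by positivity)
  have heq : gordon = fun x => (Real.log 2)⁻¹ • gordonAux x := by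
    funext x
    simp [gordon_eq, smul_eq_mul]
  rw [heq]
  exact h

/-- Submodularity of a concave function: for `0 ≤ a ≤ b` and `0 ≤ c`,
`f a + f (b + c) ≤ f (a + c) + f b`. -/
lemma ConcaveOn.submodular {f : ℝ → ℝ} (hf : ConcaveOn ℝ (Set.Ici 0) f)
    {a b c : ℝ} (ha : 0 ≤ a) (hab : a ≤ b) (hc : 0 ≤ c) :
    f a + f (b + c) ≤ f (a + c) + f b := by
  set d := b + c - a with hd_def
  by_cases hd : d = 0
  · have hb : b = a := by linarith [hc, hab]
    have hc0 : c = 0 := by linarith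
    simp [hb, hc0]
  · have hdpos : 0 < d := lt_of_le_of_ne (by simp [hd_def]; linarith) (Ne.symm hd)
    set μ := (b - a) / d with hμ_def
    have hμ0 : 0 ≤ μ := div_nonneg (by linarith) hdpos.le
    have hμ1 : μ ≤ 1 := (div_le_one hdpos).mpr (by linarith)
    have hb0 : 0 ≤ b := ha.trans hab
    have hbc0 : (0:ℝ) ≤ b + c := by linarith
    have h1 : (1 - μ) • f a + μ • f (b + c) ≤ f ((1 - μ) • a + μ • (b + c)) :=
      hf.2 (Set.mem_Ici.mpr ha) (Set.mem_Ici.mpr hbc0) (by linarith) hμ0 (by ring)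
    have h2 : μ • f a + (1 - μ) • f (b + c) ≤ f (μ • a + (1 - μ) • (b + c)) :=
      hf.2 (Set.mem_Ici.mpr ha) (Set.mem_Ici.mpr hbc0) hμ0 (by linarith) (by ring)
    have e1 : (1 - μ) • a + μ • (b + c) = b := by
      simp only [smul_eq_mul, hμ_def]
      field_simp
      ring
    have e2 : μ • a + (1 - μ) • (b + c) = a + c := by
      simp only [smul_eq_mul, hμ_def]
      field_simp
      ring
    rw [e1] at h1
    rw [e2] at h2
    simp only [smul_eq_mul] at h1 h2
    linarith

/-- assuming the conjectured entropy power-type inequality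
`S(X ⊞_τ Y) ≥ g(L_τ(X) + R_τ(Y))` with `L_τ(X) = g⁻¹(S(X ⊞_τ |0⟩⟨0|))` and
`R_τ(Y) = g⁻¹(S(|0⟩⟨0| ⊞_τ Y))`, every jammer state `σ` with
`S(|0⟩⟨0| ⊞_τ σ) ≤ g((1−τ)P)` satisfies
`S(S_E ⊞_τ σ) − S(|0⟩⟨0| ⊞_τ σ) ≥ g(τE + (1−τ)P) − g((1−τ)P)`,
where `S_E` is the thermal state of mean photon number `E` (so `L_τ(S_E) = τE`). -/
theorem capacity_lower_bound_from_conjecture {State : Type*}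
    (S : State → ℝ)                      -- von Neumann entropy
    (box : ℝ → State → State → State)    -- beam splitter `⊞_τ`
    (vac : State)                        -- vacuum `|0⟩⟨0|`
    (thermal : ℝ → State)                -- thermal state `S_N`
    (ginv : ℝ → ℝ)                       -- inverse Gordon function
    (τ E P : ℝ) (hτ : τ ∈ Set.Icc (0:ℝ) 1) (hE : 0 ≤ E) (hP : 0 ≤ P)
    (hginv_mono : StrictMonoOn ginv (Set.Ici 0))
    (hginv_nonneg : ∀ y, 0 ≤ y → 0 ≤ ginv y)
    (hginv_left : ∀ x, 0 ≤ x → ginv (gordon x) = x)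
    (hginv_right : ∀ y, 0 ≤ y → gordon (ginv y) = y)
    (hS_nonneg : ∀ X Y : State, 0 ≤ S (box τ X Y))
    (hSEvac : S (box τ (thermal E) vac) = gordon (τ * E))
    (hconj : ∀ X Y : State,
      gordon (ginv (S (box τ X vac)) + ginv (S (box τ vac Y))) ≤ S (box τ X Y)) :
    ∀ σ : State, S (box τ vac σ) ≤ gordon ((1 - τ) * P) →
      gordon (τ * E + (1 - τ) * P) - gordon ((1 - τ) * P)
        ≤ S (box τ (thermal E) σ) - S (box τ vac σ) := by
  intro σ hσ
  set a := S (box τ vac σ) with ha_def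
  have ha0 : 0 ≤ a := hS_nonneg _ _
  have hτE : 0 ≤ τ * E := mul_nonneg hτ.1 hE
  have hP' : 0 ≤ (1 - τ) * P := mul_nonneg (by linarith [hτ.2]) hP
  set R := ginv a with hR_def
  have hR0 : 0 ≤ R := hginv_nonneg a ha0
  have hgP0 : 0 ≤ gordon ((1 - τ) * P) := ha0.trans hσ
  have hRP : R ≤ (1 - τ) * P := by
    have := hginv_mono.monotoneOn (Set.mem_Ici.mpr ha0) (Set.mem_Ici.mpr hgP0) hσ
    rwa [hginv_left _ hP'] at this
  have hconj' : gordon (τ * E + R) ≤ S (box τ (thermal E) σ) := by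
    have := hconj (thermal E) σ
    rwa [hSEvac, hginv_left _ hτE, ← hR_def] at this
  have haR : gordon R = a := hginv_right a ha0
  have hsub : gordon R + gordon ((1 - τ) * P + τ * E)
      ≤ gordon (R + τ * E) + gordon ((1 - τ) * P) :=
    gordon_concave.submodular hR0 hRP hτE
  have e1 : (1 - τ) * P + τ * E = τ * E + (1 - τ) * P := by ring
  have e2 : R + τ * E = τ * E + R := by ring
  rw [e1, e2] at hsub
  linarith
end
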